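/- arXiv:2505.17974 — 2 statements merged into one kernel-verified Lean document; each statement's English description precedes it below -/
import Mathlib

section
/- Let L_A be an invertible real m×m matrix and L_B an invertible real n×n matrix, and set A = L_A L_Aᵀ and B = L_B L_Bᵀ. Let W* be a real n×m matrix and let M = L_Bᵀ W* L_A. Suppose W̃_r is a real n×m matrix with rank(W̃_r) ≤ r such that for every real n×m matrix Y with rank(Y) ≤ r one has ‖M − W̃_r‖_F ≤ ‖M − Y‖_F. Define Ŵ_r = L_B⁻ᵀ W̃_r L_A⁻¹. Then rank(Ŵ_r) ≤ r, and for every real n×m matrix W with rank(W) ≤ r, vec(W* − Ŵ_r)ᵀ (B ⊗ A) vec(W* − Ŵ_r) ≤ vec(W* − W)ᵀ (B ⊗ A) vec(W* − W). -/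
open Matrix Kronecker

/-- Row-major vectorization of a matrix: `vecM X (i, j) = X i j`. -/
def vecM {n m : Type*} (X : Matrix n m ℝ) : n × m → ℝ := fun p => X p.1 p.2

/-- Frobenius norm: `‖X‖_F = √(trace (Xᵀ * X))`. -/
noncomputable def frobNorm {n m : Type*} [Fintype n] [Fintype m] (X : Matrix n m ℝ) : ℝ :=
  Real.sqrt (Matrix.trace (Xᵀ * X))

lemma kron_mulVec_vecM {m n : ℕ} (P : Matrix (Fin n) (Fin n) ℝ) (Q : Matrix (Fin m) (Fin m) ℝ)
    (X : Matrix (Fin n) (Fin m) ℝ) :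
    (P ⊗ₖ Q) *ᵥ vecM X = vecM (P * X * Qᵀ) := by
  funext p
  obtain ⟨i, k⟩ := p
  simp only [mulVec, dotProduct, vecM, kroneckerMap_apply, Fintype.sum_prod_type,
    Matrix.mul_apply, Matrix.transpose_apply, Finset.sum_mul, Finset.mul_sum]
  rw [Finset.sum_comm]
  apply Finset.sum_congr rfl
  intro j _
  apply Finset.sum_congr rfl
  intro l _
  ring

lemma dp_trace {m n : ℕ} (X Y : Matrix (Fin n) (Fin m) ℝ) :
    vecM X ⬝ᵥ vecM Y = Matrix.trace (Xᵀ * Y) := by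
  simp only [dotProduct, vecM, Matrix.trace, Matrix.diag, Matrix.mul_apply,
    Matrix.transpose_apply, Fintype.sum_prod_type]
  exact Finset.sum_comm

lemma quad_form_eq {m n : ℕ} (LA : Matrix (Fin m) (Fin m) ℝ) (LB : Matrix (Fin n) (Fin n) ℝ)
    (X : Matrix (Fin n) (Fin m) ℝ) :
    vecM X ⬝ᵥ (((LB * LBᵀ) ⊗ₖ (LA * LAᵀ)) *ᵥ vecM X) =
      Matrix.trace ((LBᵀ * X * LA)ᵀ * (LBᵀ * X * LA)) := by
  rw [kron_mulVec_vecM, dp_trace]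
  rw [show ((LBᵀ * X * LA)ᵀ * (LBᵀ * X * LA)) = LAᵀ * (Xᵀ * (LB * ((LBᵀ * X) * LA))) by
    simp [Matrix.transpose_mul, Matrix.mul_assoc]]
  rw [Matrix.trace_mul_comm]
  simp only [Matrix.transpose_mul, Matrix.transpose_transpose, Matrix.mul_assoc]
  rw [show LB * (LBᵀ * (X * (LA * (LAᵀ * Xᵀ)))) = (LB * (LBᵀ * (X * LA))) * (LAᵀ * Xᵀ) by
    simp only [Matrix.mul_assoc], Matrix.trace_mul_comm, Matrix.mul_assoc]

lemma trace_transpose_mul_self_nonneg {m n : ℕ} (Z : Matrix (Fin n) (Fin m) ℝ) :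
    0 ≤ Matrix.trace (Zᵀ * Z) := by
  rw [← dp_trace]
  exact Finset.sum_nonneg fun i _ => mul_self_nonneg _

/-- If `W̃_r` is a best rank-`r` Frobenius approximation of
`M = L_Bᵀ W* L_A`, then `Ŵ_r = L_B⁻ᵀ W̃_r L_A⁻¹` has rank at most `r` and minimizes the
Fisher-weighted quadratic objective `vec(W* − W)ᵀ (B ⊗ A) vec(W* − W)` with
`A = L_A L_Aᵀ`, `B = L_B L_Bᵀ`, over all matrices `W` of rank at most `r`. -/
theorem stmt_0 {m n : ℕ} (r : ℕ)
    (LA : Matrix (Fin m) (Fin m) ℝ) (LB : Matrix (Fin n) (Fin n) ℝ)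
    (hLA : IsUnit LA.det) (hLB : IsUnit LB.det)
    (Wstar Wtil : Matrix (Fin n) (Fin m) ℝ)
    (hrank : Wtil.rank ≤ r)
    (hopt : ∀ Y : Matrix (Fin n) (Fin m) ℝ, Y.rank ≤ r →
      frobNorm (LBᵀ * Wstar * LA - Wtil) ≤ frobNorm (LBᵀ * Wstar * LA - Y)) :
    ((LBᵀ)⁻¹ * Wtil * LA⁻¹).rank ≤ r ∧
    ∀ W : Matrix (Fin n) (Fin m) ℝ, W.rank ≤ r →
      vecM (Wstar - (LBᵀ)⁻¹ * Wtil * LA⁻¹) ⬝ᵥ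
        (((LB * LBᵀ) ⊗ₖ (LA * LAᵀ)) *ᵥ vecM (Wstar - (LBᵀ)⁻¹ * Wtil * LA⁻¹)) ≤
      vecM (Wstar - W) ⬝ᵥ (((LB * LBᵀ) ⊗ₖ (LA * LAᵀ)) *ᵥ vecM (Wstar - W)) := by
  have hLBt : IsUnit (LBᵀ).det := by rwa [Matrix.det_transpose]
  constructor
  · exact le_trans (le_trans (Matrix.rank_mul_le_left _ _)
      (Matrix.rank_mul_le_right _ _)) hrank
  · intro W hW
    rw [quad_form_eq, quad_form_eq]
    have hcancel : LBᵀ * ((LBᵀ)⁻¹ * Wtil * LA⁻¹) * LA = Wtil := by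
      rw [← Matrix.mul_assoc, ← Matrix.mul_assoc, Matrix.mul_nonsing_inv _ hLBt,
        Matrix.one_mul, Matrix.mul_assoc, Matrix.nonsing_inv_mul _ hLA, Matrix.mul_one]
    have h1 : LBᵀ * (Wstar - (LBᵀ)⁻¹ * Wtil * LA⁻¹) * LA = LBᵀ * Wstar * LA - Wtil := by
      rw [Matrix.mul_sub, Matrix.sub_mul, hcancel]
    have h2 : LBᵀ * (Wstar - W) * LA = LBᵀ * Wstar * LA - LBᵀ * W * LA := by
      rw [Matrix.mul_sub, Matrix.sub_mul]
    rw [h1, h2]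
    have hYrank : (LBᵀ * W * LA).rank ≤ r :=
      le_trans (le_trans (Matrix.rank_mul_le_left _ _) (Matrix.rank_mul_le_right _ _)) hW
    have hle := hopt (LBᵀ * W * LA) hYrank
    unfold frobNorm at hle
    have h1n := trace_transpose_mul_self_nonneg (LBᵀ * Wstar * LA - Wtil)
    have h2n := trace_transpose_mul_self_nonneg (LBᵀ * Wstar * LA - LBᵀ * W * LA)
    calc Matrix.trace ((LBᵀ * Wstar * LA - Wtil)ᵀ * (LBᵀ * Wstar * LA - Wtil))
        = Real.sqrt (Matrix.trace ((LBᵀ * Wstar * LA - Wtil)ᵀ * (LBᵀ * Wstar * LA - Wtil))) ^ 2 := by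
          rw [Real.sq_sqrt h1n]
      _ ≤ Real.sqrt (Matrix.trace ((LBᵀ * Wstar * LA - LBᵀ * W * LA)ᵀ *
            (LBᵀ * Wstar * LA - LBᵀ * W * LA))) ^ 2 :=
          pow_le_pow_left₀ (Real.sqrt_nonneg _) hle 2
      _ = Matrix.trace ((LBᵀ * Wstar * LA - LBᵀ * W * LA)ᵀ *
            (LBᵀ * Wstar * LA - LBᵀ * W * LA)) := Real.sq_sqrt h2n
end

section
/- Let L_A be an invertible real m×m matrix and L_B an invertible real n×n matrix, set A = L_A L_Aᵀ, B = L_B L_Bᵀ, let W* be a real n×m matrix, and let M = L_Bᵀ W* L_A. Then a real n×m matrix W with rank(W) ≤ r minimizes the weighted objective W ↦ vec(W* − W)ᵀ (B ⊗ A) vec(W* − W) over all n×m matrices of rank at most r if and only if the matrix L_Bᵀ W L_A has rank at most r and minimizes Y ↦ ‖M − Y‖_F over all n×m matrices Y of rank at most r. -/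
open Matrix Kronecker

lemma s3 {n m : Type*} [Fintype n] [Fintype m] (g : n → n → m → ℝ) :
    ∑ i, ∑ j, ∑ l, g i j l = ∑ l, ∑ j, ∑ i, g i j l :=
  calc ∑ i, ∑ j, ∑ l, g i j l = ∑ j, ∑ i, ∑ l, g i j l := Finset.sum_comm
    _ = ∑ j, ∑ l, ∑ i, g i j l := Finset.sum_congr rfl fun _ _ => Finset.sum_comm
    _ = ∑ l, ∑ j, ∑ i, g i j l := Finset.sum_comm

lemma quad_eq {n m : Type*} [Fintype n] [Fintype m]
    (P : Matrix n n ℝ) (Q : Matrix m m ℝ) (C : Matrix n m ℝ) :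
    vecM C ⬝ᵥ ((P ⊗ₖ Q) *ᵥ vecM C) = Matrix.trace (Cᵀ * P * C * Qᵀ) := by
  have key : ∀ S : Finset n, ∀ T : Finset m,
      (∑ i ∈ S, ∑ k ∈ T, ∑ j ∈ S, ∑ l ∈ T, C i k * (P i j * Q k l * C j l)) =
      (∑ k ∈ T, ∑ i ∈ S, ∑ j ∈ S, ∑ l ∈ T, C i k * (P i j * Q k l * C j l)) := by
    intro S T; exact Finset.sum_comm
  simp only [vecM, dotProduct, mulVec, Matrix.trace, Matrix.diag, Matrix.mul_apply,
    kroneckerMap_apply, transpose_apply, Fintype.sum_prod_type, Finset.mul_sum, Finset.sum_mul]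
  rw [key]
  apply Finset.sum_congr rfl; intro k _
  rw [s3 (fun i j l => C i k * (P i j * Q k l * C j l))]
  apply Finset.sum_congr rfl; intro l _
  apply Finset.sum_congr rfl; intro j _
  apply Finset.sum_congr rfl; intro i _
  ring

lemma trace_nonneg' {n m : Type*} [Fintype n] [Fintype m] (X : Matrix n m ℝ) :
    0 ≤ Matrix.trace (Xᵀ * X) := by
  simp only [Matrix.trace, Matrix.diag, Matrix.mul_apply, transpose_apply]
  exact Finset.sum_nonneg fun i _ => Finset.sum_nonneg fun j _ => mul_self_nonneg _

lemma trace_eq' {n m : Type*} [Fintype n] [Fintype m]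
    (LA : Matrix m m ℝ) (LB : Matrix n n ℝ) (C : Matrix n m ℝ) :
    Matrix.trace (Cᵀ * (LB * LBᵀ) * C * (LA * LAᵀ)) =
    Matrix.trace ((LBᵀ * C * LA)ᵀ * (LBᵀ * C * LA)) := by
  have h : (LBᵀ * C * LA)ᵀ * (LBᵀ * C * LA) = LAᵀ * (Cᵀ * (LB * LBᵀ) * C * LA) := by
    simp [transpose_mul, Matrix.mul_assoc]
  rw [h]
  conv_rhs => rw [Matrix.trace_mul_comm]
  simp [Matrix.mul_assoc]

lemma quad_eq2 {n m : Type*} [Fintype n] [Fintype m]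
    (LA : Matrix m m ℝ) (LB : Matrix n n ℝ) (C : Matrix n m ℝ) :
    vecM C ⬝ᵥ (((LB * LBᵀ) ⊗ₖ (LA * LAᵀ)) *ᵥ vecM C) =
    Matrix.trace ((LBᵀ * C * LA)ᵀ * (LBᵀ * C * LA)) := by
  rw [quad_eq, ← trace_eq' LA LB C]
  congr 1
  rw [transpose_mul, transpose_transpose]

/-- With `A = L_A L_Aᵀ`, `B = L_B L_Bᵀ` and `M = L_Bᵀ W* L_A`, a matrix
`W` of rank at most `r` minimizes `vec(W* − W)ᵀ (B ⊗ A) vec(W* − W)` over rank-≤ r matrices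
iff `L_Bᵀ W L_A` has rank at most `r` and minimizes `Y ↦ ‖M − Y‖_F` over rank-≤ r matrices. -/
theorem stmt_1 {m n : ℕ} (r : ℕ)
    (LA : Matrix (Fin m) (Fin m) ℝ) (LB : Matrix (Fin n) (Fin n) ℝ)
    (hLA : IsUnit LA.det) (hLB : IsUnit LB.det)
    (Wstar W : Matrix (Fin n) (Fin m) ℝ)
    (hW : W.rank ≤ r) :
    (∀ W' : Matrix (Fin n) (Fin m) ℝ, W'.rank ≤ r →
      vecM (Wstar - W) ⬝ᵥ (((LB * LBᵀ) ⊗ₖ (LA * LAᵀ)) *ᵥ vecM (Wstar - W)) ≤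
      vecM (Wstar - W') ⬝ᵥ (((LB * LBᵀ) ⊗ₖ (LA * LAᵀ)) *ᵥ vecM (Wstar - W'))) ↔
    ((LBᵀ * W * LA).rank ≤ r ∧
      ∀ Y : Matrix (Fin n) (Fin m) ℝ, Y.rank ≤ r →
        frobNorm (LBᵀ * Wstar * LA - LBᵀ * W * LA) ≤ frobNorm (LBᵀ * Wstar * LA - Y)) := by
  have hLBT : IsUnit LBᵀ.det := by rwa [Matrix.det_transpose]
  have hdiff : ∀ W' : Matrix (Fin n) (Fin m) ℝ,
      LBᵀ * Wstar * LA - LBᵀ * W' * LA = LBᵀ * (Wstar - W') * LA := by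
    intro W'; rw [Matrix.mul_sub, Matrix.sub_mul]
  have hrank : ∀ W' : Matrix (Fin n) (Fin m) ℝ, (LBᵀ * W' * LA).rank = W'.rank := by
    intro W'
    rw [Matrix.rank_mul_eq_left_of_isUnit_det LA _ hLA,
      Matrix.rank_mul_eq_right_of_isUnit_det LBᵀ _ hLBT]
  constructor
  · intro hmin
    refine ⟨by rw [hrank]; exact hW, fun Y hY => ?_⟩
    set W' := LBᵀ⁻¹ * Y * LA⁻¹ with hW'def
    have hTW' : LBᵀ * W' * LA = Y := by
      rw [hW'def]
      rw [show LBᵀ * (LBᵀ⁻¹ * Y * LA⁻¹) * LA = (LBᵀ * LBᵀ⁻¹) * Y * (LA⁻¹ * LA) by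
        simp [Matrix.mul_assoc]]
      rw [Matrix.mul_nonsing_inv _ hLBT, Matrix.nonsing_inv_mul _ hLA, Matrix.one_mul,
        Matrix.mul_one]
    have hrW' : W'.rank ≤ r := by
      rw [hW'def, Matrix.rank_mul_eq_left_of_isUnit_det LA⁻¹ _
        (Matrix.isUnit_nonsing_inv_det _ hLA),
        Matrix.rank_mul_eq_right_of_isUnit_det LBᵀ⁻¹ _
        (Matrix.isUnit_nonsing_inv_det _ hLBT)]
      exact hY
    have h := hmin W' hrW'
    rw [quad_eq2, quad_eq2] at h
    rw [frobNorm, frobNorm, hdiff W, ← hTW', hdiff W']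
    exact Real.sqrt_le_sqrt h
  · rintro ⟨-, hmin⟩ W' hrW'
    have h := hmin (LBᵀ * W' * LA) (by rw [hrank]; exact hrW')
    rw [frobNorm, frobNorm, hdiff W, hdiff W'] at h
    rw [quad_eq2, quad_eq2]
    exact (Real.sqrt_le_sqrt_iff (trace_nonneg' _)).mp h
end
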